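/- Let J₁, J₂, J₃ be Hermitian d×d complex matrices, ψ ∈ ℂ^d a unit vector, and c a real number such that ⟨J_i⟩_ψ = 0 for all i and ⟨J_iJ_l⟩_ψ = c·δ_{il} for all i, l. Define p₀ : ℝ³ → ℝ by p₀(θ) = |⟨ψ, exp(−i(θ₁J₁+θ₂J₂+θ₃J₃))ψ⟩|². Then p₀(θ) = 1 − c·‖θ‖² + o(‖θ‖²) as θ → 0; i.e., the function θ ↦ p₀(θ) − 1 + c‖θ‖² is o(‖θ‖²) at 0. -/

import Mathlib

set_option maxHeartbeats 1000000


open Matrix Asymptotics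

/-- Under the quantum metrology conditions `⟨J_i⟩ = 0` and `⟨J_i J_l⟩ = c δ_{il}`, the
probability `p₀(θ) = |⟨ψ, exp(−i θ·J) ψ⟩|²` satisfies `p₀(θ) = 1 − c‖θ‖² + o(‖θ‖²)`
as `θ → 0`. -/
theorem probability_zero_outcome_expansion {d : ℕ}
    (J : Fin 3 → Matrix (Fin d) (Fin d) ℂ) (hJ : ∀ i, (J i).IsHermitian)
    (ψ : Fin d → ℂ) (hψ : star ψ ⬝ᵥ ψ = 1) (c : ℝ)
    (h1 : ∀ i, star ψ ⬝ᵥ (J i *ᵥ ψ) = 0)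
    (h2 : ∀ i l, star ψ ⬝ᵥ ((J i * J l) *ᵥ ψ) = if i = l then (c : ℂ) else 0)
    (p₀ : EuclideanSpace ℝ (Fin 3) → ℝ)
    (hp₀ : ∀ θ, p₀ θ = ‖(star ψ ⬝ᵥ
      ((NormedSpace.exp ((-Complex.I) • ∑ i, ((θ i : ℝ) : ℂ) • J i)) *ᵥ ψ))‖ ^ 2) :
    (fun θ : EuclideanSpace ℝ (Fin 3) => p₀ θ - (1 - c * ‖θ‖ ^ 2))
      =o[nhds 0] fun θ => ‖θ‖ ^ 2 := by
  classical
  letI : SeminormedRing (Matrix (Fin d) (Fin d) ℂ) := Matrix.linftyOpSemiNormedRing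
  letI : NormedRing (Matrix (Fin d) (Fin d) ℂ) := Matrix.linftyOpNormedRing
  letI : NormedAlgebra ℂ (Matrix (Fin d) (Fin d) ℂ) := Matrix.linftyOpNormedAlgebra
  letI : TopologicalSpace (Matrix (Fin d) (Fin d) ℂ) := PseudoMetricSpace.toUniformSpace.toTopologicalSpace
  -- the linear functional M ↦ ⟨ψ, M ψ⟩
  let φlin : Matrix (Fin d) (Fin d) ℂ →ₗ[ℂ] ℂ :=
    { toFun := fun M => star ψ ⬝ᵥ (M *ᵥ ψ)
      map_add' := fun M N => by
        show star ψ ⬝ᵥ ((M + N) *ᵥ ψ) = star ψ ⬝ᵥ (M *ᵥ ψ) + star ψ ⬝ᵥ (N *ᵥ ψ)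
        rw [Matrix.add_mulVec, dotProduct_add]
      map_smul' := fun a M => by
        show star ψ ⬝ᵥ ((a • M) *ᵥ ψ) = a • (star ψ ⬝ᵥ (M *ᵥ ψ))
        rw [Matrix.smul_mulVec, dotProduct_smul] }
  let φ : Matrix (Fin d) (Fin d) ℂ →L[ℂ] ℂ := LinearMap.toContinuousLinearMap φlin
  have hφ : ∀ M : Matrix (Fin d) (Fin d) ℂ, φ M = star ψ ⬝ᵥ (M *ᵥ ψ) := fun M => rfl
  -- the matrix-valued maps
  let B : EuclideanSpace ℝ (Fin 3) → Matrix (Fin d) (Fin d) ℂ :=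
    fun θ => ∑ i, ((θ i : ℝ) : ℂ) • J i
  let A : EuclideanSpace ℝ (Fin 3) → Matrix (Fin d) (Fin d) ℂ :=
    fun θ => (-Complex.I) • B θ
  have hBθ : ∀ θ, B θ = ∑ i, ((θ i : ℝ) : ℂ) • J i := fun _ => rfl
  have hAθ : ∀ θ, A θ = (-Complex.I) • B θ := fun _ => rfl
  -- norm bound for A
  have hcoord : ∀ (θ : EuclideanSpace ℝ (Fin 3)) (i : Fin 3), |θ i| ≤ ‖θ‖ := by
    intro θ i
    rw [EuclideanSpace.norm_eq]
    rw [show |θ i| = Real.sqrt ((θ i) ^ 2) from (Real.sqrt_sq_eq_abs _).symm]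
    apply Real.sqrt_le_sqrt
    have := Finset.single_le_sum (f := fun j => ‖θ j‖ ^ 2)
      (fun j _ => by positivity) (Finset.mem_univ i)
    simpa [Real.norm_eq_abs, sq_abs] using this
  have hAbound : ∀ θ : EuclideanSpace ℝ (Fin 3), ‖A θ‖ ≤ (∑ i, ‖J i‖) * ‖θ‖ := by
    intro θ
    have h1' : ‖A θ‖ = ‖B θ‖ := by rw [hAθ, norm_smul]; simp
    rw [h1', hBθ]
    refine le_trans (norm_sum_le _ _) ?_
    rw [Finset.sum_mul]
    refine Finset.sum_le_sum fun i _ => ?_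
    rw [norm_smul, mul_comm]
    refine mul_le_mul_of_nonneg_left ?_ (norm_nonneg _)
    simpa [Complex.norm_real, Real.norm_eq_abs] using hcoord θ i
  have hCnonneg : (0:ℝ) ≤ ∑ i, ‖J i‖ := Finset.sum_nonneg fun i _ => norm_nonneg _
  have hnormtendsto : Filter.Tendsto (fun θ : EuclideanSpace ℝ (Fin 3) => ‖θ‖)
      (nhds 0) (nhds 0) := by
    simpa using (continuous_norm (E := EuclideanSpace ℝ (Fin 3))).tendsto 0
  have hAtendsto : Filter.Tendsto A (nhds 0) (nhds 0) := by
    apply squeeze_zero_norm hAbound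
    simpa using hnormtendsto.const_mul (∑ i, ‖J i‖)
  -- Taylor expansion of exp to second order
  have hradius : 0 < (NormedSpace.expSeries ℂ (Matrix (Fin d) (Fin d) ℂ)).radius := by
    rw [NormedSpace.expSeries_radius_eq_top]; exact ENNReal.coe_lt_top
  have hfps : HasFPowerSeriesAt (NormedSpace.exp)
      (NormedSpace.expSeries ℂ (Matrix (Fin d) (Fin d) ℂ)) 0 :=
    NormedSpace.hasFPowerSeriesAt_exp_zero_of_radius_pos hradius
  have hpartial : ∀ y : Matrix (Fin d) (Fin d) ℂ,
      (NormedSpace.expSeries ℂ (Matrix (Fin d) (Fin d) ℂ)).partialSum 3 y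
      = 1 + y + (2⁻¹ : ℂ) • y ^ 2 := by
    intro y
    rw [FormalMultilinearSeries.partialSum]
    rw [Finset.sum_range_succ, Finset.sum_range_succ, Finset.sum_range_one]
    simp [NormedSpace.expSeries_apply_eq, Nat.factorial]
  have hO0 : (fun y : Matrix (Fin d) (Fin d) ℂ =>
        NormedSpace.exp y - (1 + y + (2⁻¹ : ℂ) • y ^ 2))
      =O[nhds 0] fun y => ‖y‖ ^ 3 := by
    have := hfps.isBigO_sub_partialSum_pow 3
    simpa only [zero_add, hpartial] using this
  have hO1 : (fun θ : EuclideanSpace ℝ (Fin 3) =>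
        NormedSpace.exp (A θ) - (1 + A θ + (2⁻¹ : ℂ) • (A θ) ^ 2))
      =O[nhds 0] fun θ => ‖A θ‖ ^ 3 := by
    have := hO0.comp_tendsto hAtendsto
    simpa [Function.comp_def] using this
  have hO2 : (fun θ : EuclideanSpace ℝ (Fin 3) => ‖A θ‖ ^ 3)
      =O[nhds 0] fun θ : EuclideanSpace ℝ (Fin 3) => ‖θ‖ ^ 3 := by
    refine isBigO_of_le' (c := (∑ i, ‖J i‖) ^ 3) _ fun θ => ?_
    have h := hAbound θ
    have h3 : ‖A θ‖ ^ 3 ≤ ((∑ i, ‖J i‖) * ‖θ‖) ^ 3 :=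
      pow_le_pow_left₀ (norm_nonneg _) h 3
    simpa [abs_of_nonneg (norm_nonneg _), mul_pow, Real.norm_eq_abs, abs_pow] using h3
  have hO3 : (fun θ : EuclideanSpace ℝ (Fin 3) =>
        φ (NormedSpace.exp (A θ) - (1 + A θ + (2⁻¹ : ℂ) • (A θ) ^ 2)))
      =O[nhds 0] fun θ : EuclideanSpace ℝ (Fin 3) => ‖θ‖ ^ 3 :=
    (φ.isBigO_comp _ _).trans (hO1.trans hO2)
  -- compute φ on the quadratic part
  have hnormsq : ∀ θ : EuclideanSpace ℝ (Fin 3), (‖θ‖ : ℝ) ^ 2 = ∑ i, (θ i) ^ 2 := by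
    intro θ
    rw [EuclideanSpace.norm_eq, Real.sq_sqrt (by positivity)]
    exact Finset.sum_congr rfl fun i _ => by simp [Real.norm_eq_abs, sq_abs]
  have hφB : ∀ θ, φ (B θ) = 0 := by
    intro θ
    rw [hBθ, map_sum]
    refine Finset.sum_eq_zero fun i _ => ?_
    rw [_root_.map_smul, hφ, h1 i, smul_zero]
  have hφB2 : ∀ θ : EuclideanSpace ℝ (Fin 3),
      φ (B θ * B θ) = ((c * ‖θ‖ ^ 2 : ℝ) : ℂ) := by
    intro θ
    rw [hBθ, Finset.sum_mul_sum]
    have hsm : ∀ i l : Fin 3, (((θ i : ℝ) : ℂ) • J i) * (((θ l : ℝ) : ℂ) • J l)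
        = (((θ i : ℝ) : ℂ) * ((θ l : ℝ) : ℂ)) • (J i * J l) := fun i l =>
      smul_mul_smul_comm _ _ _ _
    simp_rw [hsm]
    rw [map_sum]
    simp_rw [map_sum, _root_.map_smul, hφ, h2]
    have hinner : ∀ i : Fin 3, ∑ l, (((θ i : ℝ) : ℂ) * ((θ l : ℝ) : ℂ)) •
        (if i = l then (c : ℂ) else 0) = ((θ i : ℝ) : ℂ) ^ 2 * c := by
      intro i
      rw [Finset.sum_eq_single i]
      · rw [if_pos rfl, smul_eq_mul, sq]
      · intro l _ hl; simp [Ne.symm hl]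
      · simp
    simp_rw [hinner]
    rw [← Finset.sum_mul]
    push_cast [hnormsq θ]
    ring
  have hφP : ∀ θ : EuclideanSpace ℝ (Fin 3),
      φ (1 + A θ + (2⁻¹ : ℂ) • (A θ) ^ 2) = 1 - ((c / 2 * ‖θ‖ ^ 2 : ℝ) : ℂ) := by
    intro θ
    have hA2 : (A θ) ^ 2 = (-1 : ℂ) • (B θ * B θ) := by
      rw [hAθ, sq, smul_mul_smul_comm]
      norm_num [Complex.I_mul_I]
    have hφA2 : φ ((A θ) ^ 2) = -((c * ‖θ‖ ^ 2 : ℝ) : ℂ) := by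
      rw [hA2, _root_.map_smul, hφB2 θ, neg_one_smul]
    have hφA : φ (A θ) = 0 := by
      rw [hAθ, _root_.map_smul, hφB θ, smul_zero]
    rw [map_add, map_add, hφA, _root_.map_smul, hφA2, hφ, Matrix.one_mulVec, hψ,
      smul_eq_mul]
    push_cast
    ring
  -- the approximating function g
  let F : EuclideanSpace ℝ (Fin 3) → ℂ := fun θ => φ (NormedSpace.exp (A θ))
  let g : EuclideanSpace ℝ (Fin 3) → ℂ :=
    fun θ => F θ - (1 - ((c / 2 * ‖θ‖ ^ 2 : ℝ) : ℂ))
  have hgθ : ∀ θ, g θ = F θ - (1 - ((c / 2 * ‖θ‖ ^ 2 : ℝ) : ℂ)) := fun _ => rfl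
  have hgO : g =O[nhds 0] fun θ : EuclideanSpace ℝ (Fin 3) => ‖θ‖ ^ 3 := by
    refine hO3.congr' (Filter.Eventually.of_forall fun θ => ?_)
      (Filter.Eventually.of_forall fun _ => rfl)
    show φ (NormedSpace.exp (A θ) - (1 + A θ + (2⁻¹ : ℂ) • (A θ) ^ 2)) = g θ
    rw [map_sub, hφP θ]
  -- small-o facts
  have h32 : (fun θ : EuclideanSpace ℝ (Fin 3) => ‖θ‖ ^ 3)
      =o[nhds 0] fun θ : EuclideanSpace ℝ (Fin 3) => ‖θ‖ ^ 2 := by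
    have h1' : (fun θ : EuclideanSpace ℝ (Fin 3) => ‖θ‖)
        =o[nhds 0] (fun _ : EuclideanSpace ℝ (Fin 3) => (1 : ℝ)) :=
      (isLittleO_one_iff ℝ).2 hnormtendsto
    have := h1'.mul_isBigO
      (isBigO_refl (fun θ : EuclideanSpace ℝ (Fin 3) => ‖θ‖ ^ 2) (nhds 0))
    exact this.congr (fun θ => by ring) (fun θ => by ring)
  have h42 : (fun θ : EuclideanSpace ℝ (Fin 3) => ‖θ‖ ^ 4)
      =o[nhds 0] fun θ : EuclideanSpace ℝ (Fin 3) => ‖θ‖ ^ 2 := by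
    have h1' : (fun θ : EuclideanSpace ℝ (Fin 3) => ‖θ‖ ^ 2)
        =o[nhds 0] (fun _ : EuclideanSpace ℝ (Fin 3) => (1 : ℝ)) := by
      refine (isLittleO_one_iff ℝ).2 ?_
      simpa using hnormtendsto.pow 2
    have := h1'.mul_isBigO
      (isBigO_refl (fun θ : EuclideanSpace ℝ (Fin 3) => ‖θ‖ ^ 2) (nhds 0))
    exact this.congr (fun θ => by ring) (fun θ => by ring)
  have hgo : g =o[nhds 0] fun θ : EuclideanSpace ℝ (Fin 3) => ‖θ‖ ^ 2 :=
    hgO.trans_isLittleO h32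
  -- three little-o summands
  have hT1 : (fun θ : EuclideanSpace ℝ (Fin 3) => 2 * (1 - c / 2 * ‖θ‖ ^ 2) * (g θ).re)
      =o[nhds 0] fun θ : EuclideanSpace ℝ (Fin 3) => ‖θ‖ ^ 2 := by
    have hs : Filter.Tendsto (fun θ : EuclideanSpace ℝ (Fin 3) => 2 * (1 - c / 2 * ‖θ‖ ^ 2))
        (nhds 0) (nhds (2 * (1 - c / 2 * ‖(0 : EuclideanSpace ℝ (Fin 3))‖ ^ 2))) := by
      have hcont : Continuous (fun θ : EuclideanSpace ℝ (Fin 3) =>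
          2 * (1 - c / 2 * ‖θ‖ ^ 2)) :=
        continuous_const.mul (continuous_const.sub
          (continuous_const.mul (continuous_norm.pow 2)))
      exact hcont.tendsto 0
    have hsO : (fun θ : EuclideanSpace ℝ (Fin 3) => 2 * (1 - c / 2 * ‖θ‖ ^ 2))
        =O[nhds 0] (fun _ : EuclideanSpace ℝ (Fin 3) => (1 : ℝ)) := hs.isBigO_one ℝ
    have hre : (fun θ : EuclideanSpace ℝ (Fin 3) => (g θ).re)
        =o[nhds 0] fun θ : EuclideanSpace ℝ (Fin 3) => ‖θ‖ ^ 2 := by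
      refine IsBigO.trans_isLittleO ?_ hgo
      refine isBigO_of_le _ fun θ => ?_
      simpa [Real.norm_eq_abs] using Complex.abs_re_le_norm (g θ)
    exact (hsO.mul_isLittleO hre).congr (fun θ => rfl) (fun θ => by ring)
  have hT2 : (fun θ : EuclideanSpace ℝ (Fin 3) => Complex.normSq (g θ))
      =o[nhds 0] fun θ : EuclideanSpace ℝ (Fin 3) => ‖θ‖ ^ 2 := by
    have hgn : (fun θ : EuclideanSpace ℝ (Fin 3) => ‖g θ‖)
        =o[nhds 0] fun θ : EuclideanSpace ℝ (Fin 3) => ‖θ‖ ^ 2 := hgo.norm_left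
    have hmul := hgn.mul_isBigO hgo.isBigO.norm_left
    have h4 : (fun θ : EuclideanSpace ℝ (Fin 3) => ‖g θ‖ * ‖g θ‖)
        =o[nhds 0] fun θ : EuclideanSpace ℝ (Fin 3) => ‖θ‖ ^ 2 :=
      (hmul.congr (fun θ => rfl) (fun θ => by ring)).trans_isBigO h42.isBigO
    refine h4.congr (fun θ => ?_) (fun θ => rfl)
    rw [Complex.normSq_eq_norm_sq, sq]
  have hT3 : (fun θ : EuclideanSpace ℝ (Fin 3) => c ^ 2 / 4 * ‖θ‖ ^ 4)
      =o[nhds 0] fun θ : EuclideanSpace ℝ (Fin 3) => ‖θ‖ ^ 2 :=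
    h42.const_mul_left _
  have hsum := (hT1.add hT2).add hT3
  refine hsum.congr' (Filter.Eventually.of_forall fun θ => ?_)
    (Filter.Eventually.of_forall fun θ => rfl)
  -- the pointwise identity
  show 2 * (1 - c / 2 * ‖θ‖ ^ 2) * (g θ).re + Complex.normSq (g θ) + c ^ 2 / 4 * ‖θ‖ ^ 4
      = p₀ θ - (1 - c * ‖θ‖ ^ 2)
  have hFθ : F θ = ((1 - c / 2 * ‖θ‖ ^ 2 : ℝ) : ℂ) + g θ := by
    rw [hgθ]; push_cast; ring
  have hp : p₀ θ = Complex.normSq (F θ) := by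
    rw [hp₀ θ, ← Complex.sq_norm]
    rfl
  rw [hp, hFθ, Complex.normSq_apply]
  simp only [Complex.add_re, Complex.add_im, Complex.ofReal_re, Complex.ofReal_im,
    Complex.normSq_apply]
  ring
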